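/- Let F: ℝ → ℝ satisfy F ≡ 1 on (−t, t) with t > 0, and let (λ_k) be nondecreasing nonnegative reals with λ_k ≥ c k^b (c, b > 0) for large k. Suppose (a_k) ∈ ℓ² is such that for some s ≥ 0 and every δ > 0 and C > 0 there are infinitely many k with |a_k| > C k^{−s − 1/2 − δ}. Then for every δ > 0 the net ε ↦ (Σ_{λ_k < t/ε} |a_k|²)^{1/2} is NOT O(ε^{(1/b)(s + 1/2) + δ}) as ε → 0; in particular ‖(F(ελ_k)a_k)_k‖_{ℓ²} fails to be O(ε^N) uniformly in the Sobolev scale, so the embedded element is not in G^∞. -/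

import Mathlib

/-- Abstract form of Proposition 'regularity': let `F ≡ 1` on `(−t, t)`, `t > 0`, and
let `(λ_k)` be nondecreasing nonnegative reals with `λ_k ≥ c k^b` for large `k`.
If `(a_k) ∈ ℓ²` has, for some `s ≥ 0`, for every `δ > 0` and `C > 0` infinitely many
`k` with `|a_k| > C k^{−s−1/2−δ}`, then for every `δ > 0` the net
`ε ↦ (Σ_{λ_k < t/ε} a_k²)^{1/2}` is not `O(ε^{(1/b)(s+1/2)+δ})` as `ε → 0`;
in particular the embedded element fails the uniform `G^∞` estimates. -/
theorem embedded_nonsmooth_not_Ginfty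
    (F : ℝ → ℝ) (t : ℝ) (ht : 0 < t) (hF1 : ∀ x : ℝ, -t < x → x < t → F x = 1)
    (lam : ℕ → ℝ) (hmono : Monotone lam) (hpos : ∀ k, 0 ≤ lam k)
    (c b : ℝ) (hc : 0 < c) (hb : 0 < b)
    (k₀ : ℕ) (hweyl : ∀ k : ℕ, k₀ ≤ k → c * (k : ℝ) ^ b ≤ lam k)
    (a : ℕ → ℝ) (hl2 : Summable fun k => (a k) ^ 2)
    (s : ℝ) (hs : 0 ≤ s)
    (hbig : ∀ δ > (0:ℝ), ∀ C > (0:ℝ), ∀ m : ℕ, ∃ k : ℕ, m ≤ k ∧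
      C * (k : ℝ) ^ (-s - 1/2 - δ) < |a k|) :
    ∀ δ > (0:ℝ),
      ¬ ∃ C > (0:ℝ), ∃ ε₀ > (0:ℝ), ∀ ε : ℝ, 0 < ε → ε < ε₀ →
        Real.sqrt (∑' k : ℕ, if lam k < t / ε then (a k) ^ 2 else 0)
          ≤ C * ε ^ ((1 / b) * (s + 1/2) + δ) := by
  intro δ hδ
  rintro ⟨C, hC, ε₀, hε₀, hbd⟩
  set α : ℝ := (1 / b) * (s + 1/2) + δ with hαdef
  have hα : 0 < α := by
    rw [hαdef]
    have h1 : 0 ≤ (1 / b) * (s + 1/2) := by positivity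
    linarith
  set C' : ℝ := C * (t / (2 * c)) ^ α + 1 with hC'def
  have hC'pos : 0 < C' := by
    rw [hC'def]
    have : 0 ≤ C * (t / (2 * c)) ^ α := by positivity
    linarith
  obtain ⟨k, hkm, hka⟩ := hbig (b * δ / 2) (by positivity) C' hC'pos (max k₀ 1)
  have hkk₀ : k₀ ≤ k := le_trans (le_max_left _ _) hkm
  have hk1 : 1 ≤ k := le_trans (le_max_right _ _) hkm
  have hK1 : (1 : ℝ) ≤ (k : ℝ) := by exact_mod_cast hk1
  have hK0 : (0 : ℝ) ≤ (k : ℝ) := by linarith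
  have hKb : 0 < (k : ℝ) ^ b := Real.rpow_pos_of_pos (by linarith) b
  have hLk : c * (k : ℝ) ^ b ≤ lam k := hweyl k hkk₀
  have hL0 : 0 ≤ lam k := hpos k
  set ε : ℝ := min (ε₀ / 2) (t / (2 * (lam k + 1))) with hεdef
  have hε0 : 0 < ε := lt_min (by linarith) (by positivity)
  have hεε₀ : ε < ε₀ := lt_of_le_of_lt (min_le_left _ _) (by linarith)
  have hεle : ε ≤ t / (2 * (lam k + 1)) := min_le_right _ _
  -- lam k < t / ε
  have hlamlt : lam k < t / ε := by
    rw [lt_div_iff₀ hε0]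
    have h1 : ε * (2 * (lam k + 1)) ≤ t := by
      rw [← le_div_iff₀ (by positivity)]; exact hεle
    nlinarith
  -- the k-th term is in the sum
  have hsumm : Summable (fun j : ℕ => if lam j < t / ε then (a j) ^ 2 else 0) := by
    apply Summable.of_nonneg_of_le (fun j => ?_) (fun j => ?_) hl2
    · positivity
    · split <;> [exact le_refl _; positivity]
  have habs : |a k| ≤ Real.sqrt (∑' j : ℕ, if lam j < t / ε then (a j) ^ 2 else 0) := by
    have hterm : (a k) ^ 2 ≤ ∑' j : ℕ, if lam j < t / ε then (a j) ^ 2 else 0 := by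
      have := Summable.le_tsum hsumm k (fun j _ => by positivity)
      simpa [hlamlt] using this
    calc |a k| = Real.sqrt ((a k) ^ 2) := (Real.sqrt_sq_eq_abs _).symm
      _ ≤ _ := Real.sqrt_le_sqrt hterm
  have hup := hbd ε hε0 hεε₀
  -- bound C * ε ^ α ≤ C' * k ^ (-s - 1/2 - b*δ/2)
  have hεE : ε ≤ t / (2 * c * (k : ℝ) ^ b) := by
    refine le_trans hεle (div_le_div_of_nonneg_left ht.le (by positivity) ?_)
    nlinarith
  have hE : C * ε ^ α ≤ C' * (k : ℝ) ^ (-s - 1/2 - b * δ / 2) := by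
    have h1 : ε ^ α ≤ (t / (2 * c * (k : ℝ) ^ b)) ^ α :=
      Real.rpow_le_rpow hε0.le hεE hα.le
    have h2 : (t / (2 * c * (k : ℝ) ^ b)) ^ α
        = (t / (2 * c)) ^ α * (k : ℝ) ^ (-(b * α)) := by
      have : t / (2 * c * (k : ℝ) ^ b) = (t / (2 * c)) * (k : ℝ) ^ (-b) := by
        rw [Real.rpow_neg hK0]; field_simp
      rw [this, Real.mul_rpow (by positivity) (by positivity),
        ← Real.rpow_mul hK0]
      congr 1
      ring
    have h3 : (k : ℝ) ^ (-(b * α)) ≤ (k : ℝ) ^ (-s - 1/2 - b * δ / 2) := by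
      apply Real.rpow_le_rpow_of_exponent_le hK1
      have hbα : b * α = (s + 1/2) + b * δ := by
        rw [hαdef]; field_simp
      rw [hbα]
      nlinarith
    have hKe : 0 ≤ (k : ℝ) ^ (-s - 1/2 - b * δ / 2) := by positivity
    calc C * ε ^ α ≤ C * ((t / (2 * c)) ^ α * (k : ℝ) ^ (-(b * α))) := by
          rw [← h2]; exact mul_le_mul_of_nonneg_left h1 hC.le
      _ = (C * (t / (2 * c)) ^ α) * (k : ℝ) ^ (-(b * α)) := by ring
      _ ≤ (C * (t / (2 * c)) ^ α) * (k : ℝ) ^ (-s - 1/2 - b * δ / 2) :=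
          mul_le_mul_of_nonneg_left h3 (by positivity)
      _ ≤ C' * (k : ℝ) ^ (-s - 1/2 - b * δ / 2) := by
          apply mul_le_mul_of_nonneg_right _ hKe
          rw [hC'def]; linarith
  exact absurd (le_trans habs (le_trans hup hE)) (not_le.mpr hka)
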